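/- The Construction-1 packet-level code C_{(a,a(r+1)−1,r)} is a (1,r) streaming code: if the single packet c(t) is erased and all message packets m(t') with t' < t are known, then for each i ∈ {0,…,r−1} the symbol m_i(t) is uniquely determined by the parity symbol p_0(t+r−i) together with the unerased packets c(t+1),…,c(t+r); hence m(t) is recovered within delay r. -/
import Mathlib


/-- A packet-level code with a causal systematic encoder: the parity part of the
coded packet at time `t` is a fixed function of the message packets at times `≤ t`. -/
structure PacketCode (F : Type) (k n : ℕ) where
  parity : (ℤ → Fin k → F) → ℤ → Fin (n - k) → F
  causal : ∀ (m m' : ℤ → Fin k → F) (t : ℤ),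
    (∀ t' ≤ t, m t' = m' t') → parity m t = parity m' t

/-- A valid message stream vanishes at negative times. -/
def IsMsgStream {F : Type} [Zero F] {k : ℕ} (m : ℤ → Fin k → F) : Prop :=
  ∀ t < 0, m t = 0

/-- `(a, τ)` streaming-code property. -/
def IsSC {F : Type} [Zero F] {k n : ℕ} (C : PacketCode F k n) (a τ : ℕ) : Prop :=
  ∀ m m' : ℤ → Fin k → F, IsMsgStream m → IsMsgStream m' →
    ∀ t : ℤ, 0 ≤ t →
      ∀ E : Finset ℤ, (∀ x ∈ E, t ≤ x ∧ x ≤ t + τ) → t ∈ E → E.card ≤ a →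
        (∀ t' < t, m t' = m' t') →
        (∀ t' : ℤ, t ≤ t' → t' ≤ t + τ → t' ∉ E →
          m t' = m' t' ∧ C.parity m t' = C.parity m' t') →
        m t = m' t

/-- `(a, τ, r)` locally recoverable streaming code. -/
def IsLRSC {F : Type} [Zero F] {k n : ℕ} (C : PacketCode F k n) (a τ r : ℕ) : Prop :=
  IsSC C a τ ∧ IsSC C 1 r
/-- Every square submatrix of `M` is nonsingular. -/
def AllSquareSubmatricesNonsingular {K : Type} [Field K] {r a : ℕ}
    (M : Matrix (Fin r) (Fin a) K) : Prop :=
  ∀ (z : ℕ) (ρ : Fin z → Fin r) (σ : Fin z → Fin a),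
    Function.Injective ρ → Function.Injective σ → (M.submatrix ρ σ).det ≠ 0

/-- `Γ = C ⬝ diag(α₀,…,α_{a-1})`, i.e. the `j`-th column of `C` scaled by `α j`. -/
def gammaMatrix {K : Type} [Field K] {r a : ℕ} (C : Matrix (Fin r) (Fin a) K)
    (α : Fin a → K) : Matrix (Fin r) (Fin a) K :=
  Matrix.of fun i j => C i j * α j
/-- Construction 1: the packet-level code with `k = r`, `n = r+1` and parity
`p₀(t) = Σ_{j=0}^{a-1} \hat m(t - r - j(r+1)) · Γ_j`, where
`\hat m(s) = (m_0(s), m_1(s+1), …, m_{r-1}(s+r-1))`. -/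
def construction1 {K : Type} [Field K] {r a : ℕ} (Γ : Matrix (Fin r) (Fin a) K) :
    PacketCode K r (r + 1) where
  parity := fun m t _ => ∑ j : Fin a, ∑ i : Fin r,
    Γ i j * m (t - (r : ℤ) - ((j : ℕ) : ℤ) * ((r : ℤ) + 1) + ((i : ℕ) : ℤ)) i
  causal := by
    intro m m' t h
    funext s
    refine Finset.sum_congr rfl fun j _ => Finset.sum_congr rfl fun i _ => ?_
    have h1 : (0 : ℤ) ≤ ((j : ℕ) : ℤ) * ((r : ℤ) + 1) := by positivity
    have h2 : ((i : ℕ) : ℤ) < (r : ℤ) := by exact_mod_cast i.isLt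
    rw [h (t - (r : ℤ) - ((j : ℕ) : ℤ) * ((r : ℤ) + 1) + ((i : ℕ) : ℤ)) (by linarith)]

/-- Construction 1 is a `(1,r)` streaming code: if the single packet `c(t)` is
erased and all past message packets are known, then for each `i ∈ {0,…,r-1}` the
symbol `m_i(t)` is uniquely determined by the parity symbol `p₀(t+r-i)` together
with the unerased packets `c(t+1),…,c(t+r)`; hence `m(t)` is recovered within
delay `r`. -/
theorem construction1_is_one_r_SC
    (K : Type) [Field K] [Fintype K] (q a r : ℕ)
    (hq : IsPrimePow q) (ha : 2 ≤ a) (hr : 1 ≤ r)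
    (Fsub : ℕ → Subfield K) (hmono : Monotone Fsub)
    (hcard : ∀ j ≤ a - 1, Nat.card (Fsub j) = q ^ 2 ^ (j - 1))
    (htop : Fsub (a - 1) = ⊤)
    (C : Matrix (Fin r) (Fin a) K) (hC : ∀ i j, C i j ∈ Fsub 0)
    (hCns : AllSquareSubmatricesNonsingular C)
    (α : Fin a → K)
    (hα01 : ∀ j : Fin a, (j : ℕ) ≤ 1 → α j = 1)
    (hαmem : ∀ j : Fin a, 2 ≤ (j : ℕ) → α j ∈ Fsub (j : ℕ) ∧ α j ∉ Fsub ((j : ℕ) - 1))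
    :
    (∀ m m' : ℤ → Fin r → K, IsMsgStream m → IsMsgStream m' →
      ∀ t : ℤ, 0 ≤ t →
        (∀ t' < t, m t' = m' t') →
        (∀ t' : ℤ, t + 1 ≤ t' → t' ≤ t + r →
          m t' = m' t' ∧
          (construction1 (gammaMatrix C α)).parity m t' =
            (construction1 (gammaMatrix C α)).parity m' t') →
        ∀ i : Fin r,
          (construction1 (gammaMatrix C α)).parity m (t + (r : ℤ) - ((i : ℕ) : ℤ)) =
            (construction1 (gammaMatrix C α)).parity m' (t + (r : ℤ) - ((i : ℕ) : ℤ)) →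
          m t i = m' t i) ∧
    IsSC (construction1 (gammaMatrix C α)) 1 r := by
  
  haveI : NeZero a := ⟨by omega⟩
  have key : ∀ m m' : ℤ → Fin r → K, IsMsgStream m → IsMsgStream m' →
      ∀ t : ℤ, 0 ≤ t →
        (∀ t' < t, m t' = m' t') →
        (∀ t' : ℤ, t + 1 ≤ t' → t' ≤ t + r → m t' = m' t') →
        ∀ i : Fin r,
          (construction1 (gammaMatrix C α)).parity m (t + (r : ℤ) - ((i : ℕ) : ℤ)) =
            (construction1 (gammaMatrix C α)).parity m' (t + (r : ℤ) - ((i : ℕ) : ℤ)) →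
          m t i = m' t i := by
    intro m m' hm hm' t ht hpast hun i hpar
    set s : ℤ := t + (r : ℤ) - ((i : ℕ) : ℤ) with hs
    have h0 := congrFun hpar ⟨0, by omega⟩
    simp only [construction1, gammaMatrix, Matrix.of_apply] at h0
    set idx : Fin a → Fin r → ℤ :=
      fun j i' => s - (r : ℤ) - ((j : ℕ) : ℤ) * ((r : ℤ) + 1) + ((i' : ℕ) : ℤ) with hidx
    have hagree : ∀ (j : Fin a) (i' : Fin r), (j ≠ 0 ∨ i' ≠ i) →
        m (idx j i') i' = m' (idx j i') i' := by
      intro j i' hne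
      have hi : ((i : ℕ) : ℤ) < (r : ℤ) := by exact_mod_cast i.isLt
      have hi' : ((i' : ℕ) : ℤ) < (r : ℤ) := by exact_mod_cast i'.isLt
      rcases eq_or_ne j 0 with rfl | hj
      · -- j = 0
        have hj0 : ((0 : Fin a) : ℕ) = 0 := rfl
        have hidx0 : idx 0 i' = t - ((i : ℕ) : ℤ) + ((i' : ℕ) : ℤ) := by
          simp [hidx, hj0, hs]; ring
        have hii' : i' ≠ i := by tauto
        rcases lt_or_gt_of_ne (fun h => hii' (Fin.ext h) : (i' : ℕ) ≠ (i : ℕ)) with h | h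
        · have : idx 0 i' < t := by
            rw [hidx0]; have : ((i' : ℕ) : ℤ) < ((i : ℕ) : ℤ) := by exact_mod_cast h
            linarith
          rw [hpast _ this]
        · have h1 : t + 1 ≤ idx 0 i' := by
            rw [hidx0]; have : ((i : ℕ) : ℤ) < ((i' : ℕ) : ℤ) := by exact_mod_cast h
            linarith
          have h2 : idx 0 i' ≤ t + r := by rw [hidx0]; linarith [Int.ofNat_nonneg i.1]
          rw [hun _ h1 h2]
      · -- j ≥ 1
        have hj1 : (1 : ℤ) ≤ ((j : ℕ) : ℤ) := by
          have : (j : ℕ) ≠ 0 := fun h => hj (Fin.ext h)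
          omega
        have hmul : ((r : ℤ) + 1) ≤ ((j : ℕ) : ℤ) * ((r : ℤ) + 1) := by
          nlinarith
        have : idx j i' < t := by
          simp only [hidx, hs]
          linarith
        rw [hpast _ this]
    have hsub : ∑ j : Fin a, ∑ i' : Fin r,
        C i' j * α j * (m (idx j i') i' - m' (idx j i') i') = 0 := by
      simp only [mul_sub, Finset.sum_sub_distrib]
      rw [sub_eq_zero]
      exact h0
    have hterm : ∑ j : Fin a, ∑ i' : Fin r,
        C i' j * α j * (m (idx j i') i' - m' (idx j i') i')
        = C i 0 * α 0 * (m (idx 0 i) i - m' (idx 0 i) i) := by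
      rw [Finset.sum_eq_single (0 : Fin a)]
      · rw [Finset.sum_eq_single i]
        · intro b _ hb
          rw [hagree 0 b (Or.inr hb), sub_self, mul_zero]
        · intro h; exact absurd (Finset.mem_univ i) h
      · intro b _ hb
        apply Finset.sum_eq_zero
        intro i' _
        rw [hagree b i' (Or.inl hb), sub_self, mul_zero]
      · intro h; exact absurd (Finset.mem_univ (0 : Fin a)) h
    rw [hterm] at hsub
    have hidx0i : idx 0 i = t := by
      simp only [hidx, hs, Fin.val_zero]; push_cast; ring
    rw [hidx0i] at hsub
    have hα0 : α 0 = 1 := hα01 0 (by simp)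
    have hC0 : C i 0 ≠ 0 := by
      have := hCns 1 (fun _ => i) (fun _ => 0)
        (Function.injective_of_subsingleton _) (Function.injective_of_subsingleton _)
      rwa [Matrix.det_fin_one, Matrix.submatrix_apply] at this
    rw [hα0, mul_one] at hsub
    have := mul_eq_zero.mp hsub
    rcases this with h | h
    · exact absurd h hC0
    · exact sub_eq_zero.mp h
  constructor
  · intro m m' hm hm' t ht hpast hun i hpar
    exact key m m' hm hm' t ht hpast (fun t' h1 h2 => (hun t' h1 h2).1) i hpar
  · intro m m' hm hm' t ht E hE htE hcard1 hpast hun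
    have hEeq : ∀ x ∈ E, x = t := by
      intro x hx
      exact Finset.card_le_one.mp hcard1 x hx t htE
    have hun' : ∀ t' : ℤ, t + 1 ≤ t' → t' ≤ t + r → m t' = m' t' := by
      intro t' h1 h2
      exact (hun t' (by linarith) h2 (fun h => by have := hEeq t' h; omega)).1
    funext i
    apply key m m' hm hm' t ht hpast hun' i
    have hi : ((i : ℕ) : ℤ) < (r : ℤ) := by exact_mod_cast i.isLt
    have h1 : t ≤ t + (r : ℤ) - ((i : ℕ) : ℤ) := by linarith [Int.ofNat_nonneg i.1]
    have h2 : t + (r : ℤ) - ((i : ℕ) : ℤ) ≤ t + r := by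
      have : (0 : ℤ) ≤ ((i : ℕ) : ℤ) := Int.ofNat_nonneg i.1
      linarith
    have hne : t + (r : ℤ) - ((i : ℕ) : ℤ) ∉ E := by
      intro h; have := hEeq _ h; omega
    exact (hun _ h1 h2 hne).2
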